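/- Let ℓ ≥ 3 be an integer and let G_{2,ℓ} be the graph described in the context. Then for every choice of vertices x_i ∈ {t_{i,1}, t_{i,2}} for i = 2,…,ℓ−1, the set {t_{1,1}, v, x_2,…,x_{ℓ−1}} is a total dominating set of G_{2,ℓ} of cardinality ℓ. -/
import Mathlib


/-- Vertices of `G_{2,ℓ}`: triangle vertices `t_{i,j}` as `Sum.inl (i,j)`
(0-indexed), and `u = Sum.inr false`, `v = Sum.inr true`. -/
abbrev G2lV (l : ℕ) := (Fin (l - 1) × Fin 3) ⊕ Bool

/-- Edge relation of `G_{2,ℓ}`: triangles on each `t_{i,·}`; the edge `uv`;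
`u` and `v` adjacent to `t_{1,1}` (0-indexed `(0,0)`); `u` adjacent to all
`t_{i,j}` with `i ≥ 2` (0-indexed `i.val ≥ 1`); `v` adjacent to `t_{i,1}`,
`t_{i,2}` (0-indexed `j ∈ {0,1}`) for `i ≥ 2`. -/
def G2lRel (l : ℕ) : G2lV l → G2lV l → Prop
  | .inl p, .inl q => p.1 = q.1
  | .inr false, .inl p => (p.1.val = 0 ∧ p.2.val = 0) ∨ 1 ≤ p.1.val
  | .inr true, .inl p =>
      (p.1.val = 0 ∧ p.2.val = 0) ∨ (1 ≤ p.1.val ∧ (p.2.val = 0 ∨ p.2.val = 1))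
  | .inr false, .inr true => True
  | _, _ => False

/-- The graph `G_{2,ℓ}`. -/
def G2l (l : ℕ) : SimpleGraph (G2lV l) := SimpleGraph.fromRel (G2lRel l)

/-- `D` is a total dominating set of `G`. -/
def IsTotalDomSet {V : Type*} (G : SimpleGraph V) (D : Finset V) : Prop :=
  ∀ v : V, ∃ d ∈ D, G.Adj v d

/-- For every choice `x_i ∈ {t_{i,1}, t_{i,2}}` for `i = 2, …, ℓ-1` (0-indexed
`1 ≤ i.val`), the set `{t_{1,1}, v, x_2, …, x_{ℓ-1}}` is a total dominating
set of `G_{2,ℓ}` of cardinality `ℓ`. -/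
theorem stmt8 (l : ℕ) (hl : 3 ≤ l)
    (c : Fin (l - 1) → Fin 3) (hc : ∀ i, 1 ≤ i.val → (c i).val = 0 ∨ (c i).val = 1)
    (D : Finset (G2lV l))
    (hDdef : D = insert (Sum.inl ((⟨0, by omega⟩ : Fin (l - 1)), 0))
        (insert (Sum.inr true)
          (Finset.image (fun i => Sum.inl (i, c i))
            (Finset.univ.filter (fun i : Fin (l - 1) => 1 ≤ i.val))))) :
    IsTotalDomSet (G2l l) D ∧ D.card = l := by
  subst hDdef
  have h0 : (0:ℕ) < l - 1 := by omega
  set z : Fin (l-1) := ⟨0, h0⟩ with hz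
  constructor
  · intro w
    match w with
    | .inr false =>
      refine ⟨Sum.inr true, by simp, ?_⟩
      constructor
      · simp
      · left; trivial
    | .inr true =>
      refine ⟨Sum.inl (z, 0), by simp, ?_⟩
      constructor
      · simp
      · left; left; exact ⟨rfl, rfl⟩
    | .inl (i, j) =>
      rcases Nat.eq_zero_or_pos i.val with hi | hi
      · -- i = 0
        rcases Nat.eq_zero_or_pos j.val with hj | hj
        · -- vertex is t_{0,0}; neighbor v
          refine ⟨Sum.inr true, by simp, ?_⟩
          refine ⟨by simp, Or.inr (Or.inl ⟨hi, hj⟩)⟩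
        · -- neighbor t_{0,0}
          refine ⟨Sum.inl (z, 0), by simp, ?_⟩
          refine ⟨?_, Or.inl ?_⟩
          · simp only [ne_eq, Sum.inl.injEq, Prod.mk.injEq, not_and]
            intro _ hj'
            subst hj'
            simp at hj
          · show i = z
            exact Fin.ext hi
      · -- i ≥ 1
        by_cases hji : j = c i
        · refine ⟨Sum.inr true, by simp, ?_⟩
          refine ⟨by simp, Or.inr (Or.inr ?_)⟩
          exact ⟨hi, by subst hji; exact hc i hi⟩
        · refine ⟨Sum.inl (i, c i), ?_, ?_⟩
          · simp only [Finset.mem_insert, Finset.mem_image, Finset.mem_filter,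
              Finset.mem_univ, true_and]
            right; right; exact ⟨i, hi, rfl⟩
          · exact ⟨by simp [hji], Or.inl rfl⟩
  · rw [Finset.card_insert_of_notMem, Finset.card_insert_of_notMem,
      Finset.card_image_of_injective]
    · have : (Finset.univ.filter (fun i : Fin (l-1) => 1 ≤ i.val)).card = l - 2 := by
        have heq : Finset.univ.filter (fun i : Fin (l-1) => 1 ≤ i.val)
            = Finset.univ.erase z := by
          ext i
          simp only [Finset.mem_filter, Finset.mem_univ, true_and, Finset.mem_erase, and_true]
          constructor
          · intro h hiz; rw [hiz] at h; simp [hz] at h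
          · intro h
            rcases Nat.eq_zero_or_pos i.val with h0' | h0'
            · exact absurd (Fin.ext h0') h
            · exact h0'
        rw [heq, Finset.card_erase_of_mem (Finset.mem_univ _)]
        simp; omega
      omega
    · intro a b hab
      have : (a, c a) = (b, c b) := by simpa using hab
      exact (Prod.ext_iff.mp this).1
    · simp
    · simp only [Finset.mem_insert, Finset.mem_image, Finset.mem_filter]
      push_neg
      refine ⟨by simp, ?_⟩
      intro i hi
      simp only [ne_eq, Sum.inl.injEq, Prod.mk.injEq, not_and]
      intro h; rw [h] at hi; simp [hz] at hi
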